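/- Cumulative error bound for the charge increment domain linearization: suppose the approximation satisfies ‖Δζ̂ − Δζ‖_∞ ≤ B and Δζ̂ ≤ Δζ pointwise. Then along any vehicle course C, the cumulative charge state error satisfies |ŷ(C_j) − y(C_j)| ≤ σ(j)·B for every element C_j, where σ(j) is the number of recharge events preceding C_j. -/
import Mathlib


/-- Cumulative error bound for the charge increment domain linearization:
if ‖Δζ̂ − Δζ‖ ≤ B and Δζ̂ ≤ Δζ pointwise, then along any vehicle course the cumulative
charge state error satisfies |ŷ(C_j) − y(C_j)| ≤ σ(j)·B, where σ(j) is the number of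
recharge events preceding C_j. -/
theorem cumulative_error_bound
    (n : ℕ) (chg : ℕ → Bool) (t e : ℕ → ℝ) (T : ℝ) (hT : 0 < T)
    (Δ Δ' : ℝ → ℝ → ℝ)  -- exact and approximate charge increment functions Δζ, Δζ̂
    (he : ∀ j, 0 ≤ e j) (ht : ∀ j, t j ∈ Set.Icc 0 T)
    (y yh : ℕ → ℝ)       -- exact and approximate charge propagation along the course
    (hy0 : y 0 = 1) (hyh0 : yh 0 = 1)
    (hystep : ∀ j < n,
      (chg j = true → y (j + 1) = y j + Δ (y j) (t j)) ∧
      (chg j = false → y (j + 1) = y j - e j))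
    (hyhstep : ∀ j < n,
      (chg j = true → yh (j + 1) = yh j + Δ' (yh j) (t j)) ∧
      (chg j = false → yh (j + 1) = yh j - e j))
    (hrange : ∀ j ≤ n, y j ∈ Set.Icc (0:ℝ) 1 ∧ yh j ∈ Set.Icc (0:ℝ) 1)
    (hΔanti : ∀ t' ∈ Set.Icc (0:ℝ) T, AntitoneOn (fun z => Δ z t') (Set.Icc 0 1))
    (hΔ'anti : ∀ t' ∈ Set.Icc (0:ℝ) T, AntitoneOn (fun z => Δ' z t') (Set.Icc 0 1))
    (hmonoΔ : ∀ t' ∈ Set.Icc (0:ℝ) T, MonotoneOn (fun z => z + Δ z t') (Set.Icc 0 1))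
    (hmonoΔ' : ∀ t' ∈ Set.Icc (0:ℝ) T, MonotoneOn (fun z => z + Δ' z t') (Set.Icc 0 1))
    (heps : ∀ z ∈ Set.Icc (0:ℝ) 1, ∀ t' ∈ Set.Icc (0:ℝ) T, Δ' z t' ≤ Δ z t')
    (B : ℝ)
    (hB : ∀ z ∈ Set.Icc (0:ℝ) 1, ∀ t' ∈ Set.Icc (0:ℝ) T, |Δ' z t' - Δ z t'| ≤ B) :
    ∀ j ≤ n, |yh j - y j| ≤
      ((Finset.range j).filter (fun i => chg i = true)).card * B := by
  have hB0 : 0 ≤ B :=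
    le_trans (abs_nonneg _) (hB 0 ⟨le_refl 0, zero_le_one⟩ 0 ⟨le_refl 0, le_of_lt hT⟩)
  have key : ∀ j ≤ n, yh j ≤ y j ∧
      y j - yh j ≤ ((Finset.range j).filter (fun i => chg i = true)).card * B := by
    intro j
    induction j with
    | zero => intro _; simp [hy0, hyh0]
    | succ j ih =>
      intro hj
      have hjn : j < n := hj
      obtain ⟨h1, h2⟩ := ih (le_of_lt hjn)
      have hyj := (hrange j (le_of_lt hjn)).1
      have hyhj := (hrange j (le_of_lt hjn)).2
      cases hc : chg j with
      | false =>
        have hy := (hystep j hjn).2 hc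
        have hyh := (hyhstep j hjn).2 hc
        have hcard : ((Finset.range (j+1)).filter (fun i => chg i = true)).card
            = ((Finset.range j).filter (fun i => chg i = true)).card := by
          rw [Finset.range_add_one, Finset.filter_insert]
          simp [hc]
        rw [hy, hyh, hcard]
        constructor <;> linarith
      | true =>
        have hy := (hystep j hjn).1 hc
        have hyh := (hyhstep j hjn).1 hc
        have htj := ht j
        have hle1 : yh j + Δ' (yh j) (t j) ≤ yh j + Δ (yh j) (t j) := by
          have := heps (yh j) hyhj (t j) htj; linarith
        have hle2 : yh j + Δ (yh j) (t j) ≤ y j + Δ (y j) (t j) :=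
          hmonoΔ (t j) htj hyhj hyj h1
        have hanti : Δ (y j) (t j) ≤ Δ (yh j) (t j) :=
          hΔanti (t j) htj hyhj hyj h1
        have hBb : Δ (yh j) (t j) - Δ' (yh j) (t j) ≤ B := by
          have h := abs_le.mp (hB (yh j) hyhj (t j) htj)
          linarith [h.1]
        have hcard : ((Finset.range (j+1)).filter (fun i => chg i = true)).card
            = ((Finset.range j).filter (fun i => chg i = true)).card + 1 := by
          rw [Finset.range_add_one, Finset.filter_insert]
          simp [hc, Finset.card_insert_of_notMem, Finset.notMem_range_self]
        rw [hy, hyh, hcard]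
        push_cast
        constructor <;> linarith
  intro j hj
  obtain ⟨h1, h2⟩ := key j hj
  rw [abs_sub_comm, abs_of_nonneg (by linarith)]
  exact h2
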